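/- The following two conditions are equivalent: (i) there exist class 𝒦 functions α, β : [0,∞) → [0,∞) such that β(A⋆(s,a)) ≥ Â(s,a) ≥ α(A⋆(s,a)) for all (s,a) ∈ S × A; (ii) for every s ∈ S, the set {a ∈ A : Â(s,a) = 0} equals the set {a ∈ A : A⋆(s,a) = 0}, i.e., argmin_a Â(s,a) = argmin_a A⋆(s,a) for every s. (Corollary 1.) -/

import Mathlib

/-- A class `𝒦` function `[0,∞) → [0,∞)`: vanishes at `0` and is strictly
increasing on `[0,∞)` (nonnegativity on `[0,∞)` then follows). -/
def IsClassK (α : ℝ → ℝ) : Prop :=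
  α 0 = 0 ∧ StrictMonoOn α (Set.Ici 0)

private lemma divmono : ∀ x y : ℝ, 0 ≤ x → x ≤ y → x / (x + 1) ≤ y / (y + 1) := by
  intro x y hx hxy
  rw [div_le_div_iff₀ (by linarith) (by linarith)]
  nlinarith

private lemma divstrict : ∀ x y : ℝ, 0 ≤ x → x < y → x / (x + 1) < y / (y + 1) := by
  intro x y hx hxy
  rw [div_lt_div_iff₀ (by linarith) (by linarith)]
  nlinarith

/-- Corollary 1: there exist class `𝒦` functions `α, β` with
`β(A⋆(s,a)) ≥ Â(s,a) ≥ α(A⋆(s,a))` for all `(s,a)` iff for every `s` the zeros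
(minimizers) of `Â(s,·)` coincide with the zeros (minimizers) of `A⋆(s,·)`. -/
theorem stmt_7 {S A : Type*} [TopologicalSpace S] [TopologicalSpace A]
    [CompactSpace S] [CompactSpace A] [Nonempty S] [Nonempty A]
    (Astar Ahat : S × A → ℝ)
    (hAstar_cont : Continuous Astar) (hAhat_cont : Continuous Ahat)
    (hAstar_nonneg : ∀ p : S × A, 0 ≤ Astar p)
    (hAhat_nonneg : ∀ p : S × A, 0 ≤ Ahat p)
    (hAstar_zero : ∀ s : S, ∃ a : A, Astar (s, a) = 0)
    (hAhat_zero : ∀ s : S, ∃ a : A, Ahat (s, a) = 0) :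
    (∃ α β : ℝ → ℝ, IsClassK α ∧ IsClassK β ∧
        ∀ p : S × A, α (Astar p) ≤ Ahat p ∧ Ahat p ≤ β (Astar p)) ↔
      (∀ s : S, {a : A | Ahat (s, a) = 0} = {a : A | Astar (s, a) = 0}) := by
  constructor
  · rintro ⟨α, β, ⟨hα0, hαmono⟩, ⟨hβ0, hβmono⟩, hbound⟩ s
    ext a
    simp only [Set.mem_setOf_eq]
    constructor
    · intro hzero
      by_contra hne
      have hpos : 0 < Astar (s, a) := lt_of_le_of_ne (hAstar_nonneg _) (Ne.symm hne)
      have h1 := (hbound (s, a)).1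
      have h2 : α 0 < α (Astar (s, a)) :=
        hαmono Set.self_mem_Ici (le_of_lt hpos) hpos
      rw [hα0] at h2
      linarith
    · intro hzero
      have h1 := (hbound (s, a)).2
      rw [hzero, hβ0] at h1
      have := hAhat_nonneg (s, a)
      linarith
  · intro h
    have hz : ∀ p : S × A, Ahat p = 0 ↔ Astar p = 0 := by
      rintro ⟨ps, pa⟩
      exact Set.ext_iff.mp (h ps) pa
    -- a point where Astar vanishes
    obtain ⟨a0, ha0⟩ := hAstar_zero (Classical.arbitrary S)
    set p0 : S × A := (Classical.arbitrary S, a0) with hp0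
    -- bounds on images of Ahat
    have hbdd_below : ∀ t : Set (S × A), BddBelow (Ahat '' t) := by
      intro t
      refine ⟨0, ?_⟩
      rintro y ⟨p, _, rfl⟩
      exact hAhat_nonneg p
    have hbdd_above : ∀ t : Set (S × A), BddAbove (Ahat '' t) :=
      fun t => BddAbove.mono (Set.image_subset_range _ _)
        (isCompact_range hAhat_cont).bddAbove
    by_cases hMz : ∀ p : S × A, Astar p = 0
    · -- degenerate case: Astar ≡ 0, hence Ahat ≡ 0; take identities
      refine ⟨id, id, ⟨rfl, fun x _ y _ hxy => hxy⟩, ⟨rfl, fun x _ y _ hxy => hxy⟩, ?_⟩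
      intro p
      have h1 : Astar p = 0 := hMz p
      have h2 : Ahat p = 0 := (hz p).mpr h1
      simp [h1, h2]
    · -- main case: the maximum M of Astar is positive
      push_neg at hMz
      obtain ⟨q, hq⟩ := hMz
      obtain ⟨pM, -, hpM⟩ := isCompact_univ.exists_isMaxOn (Set.univ_nonempty)
        hAstar_cont.continuousOn
      set M : ℝ := Astar pM with hMdef
      have hM_ub : ∀ p : S × A, Astar p ≤ M := fun p => hpM (Set.mem_univ p)
      have hMpos : 0 < M :=
        lt_of_lt_of_le (lt_of_le_of_ne (hAstar_nonneg q) (Ne.symm hq)) (hM_ub q)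
      -- lower envelope g and upper envelope φ
      set g : ℝ → ℝ := fun r => sInf (Ahat '' {p | r ≤ Astar p}) with hgdef
      set φ : ℝ → ℝ := fun r => sSup (Ahat '' {p | Astar p ≤ r}) with hφdef
      have hg_nonneg : ∀ r, 0 ≤ g r := by
        intro r
        apply Real.sInf_nonneg
        rintro y ⟨p, _, rfl⟩
        exact hAhat_nonneg p
      have hg_mono : ∀ a b : ℝ, a ≤ b → b ≤ M → g a ≤ g b := by
        intro a b hab hbM
        apply csInf_le_csInf (hbdd_below _)
        · exact ⟨Ahat pM, pM, hbM, rfl⟩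
        · exact Set.image_mono (fun p hp => le_trans hab hp)
      have hg_pos : ∀ r : ℝ, 0 < r → r ≤ M → 0 < g r := by
        intro r hr hrM
        have hK : IsClosed {p : S × A | r ≤ Astar p} :=
          isClosed_le continuous_const hAstar_cont
        obtain ⟨pmin, hpmin, hmin⟩ := hK.isCompact.exists_isMinOn ⟨pM, hrM⟩
          hAhat_cont.continuousOn
        have hpos : 0 < Ahat pmin := by
          rcases lt_or_eq_of_le (hAhat_nonneg pmin) with h' | h'
          · exact h'
          · exfalso
            have := (hz pmin).mp h'.symm
            have : r ≤ (0 : ℝ) := this ▸ hpmin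
            linarith
        calc (0 : ℝ) < Ahat pmin := hpos
          _ ≤ g r := by
            refine le_csInf ⟨Ahat pmin, pmin, hpmin, rfl⟩ ?_
            rintro y ⟨p, hp, rfl⟩
            exact hmin hp
      have hg_le : ∀ p : S × A, g (Astar p) ≤ Ahat p := fun p =>
        csInf_le (hbdd_below _) ⟨p, le_refl (Astar p), rfl⟩
      -- φ properties
      have hφ_mono : ∀ a b : ℝ, 0 ≤ a → a ≤ b → φ a ≤ φ b := by
        intro a b ha hab
        apply csSup_le_csSup (hbdd_above _)
        · exact ⟨Ahat p0, p0, by simp [Set.mem_setOf_eq, ha0, ha], rfl⟩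
        · exact Set.image_mono (fun p hp => le_trans hp hab)
      have hφ0 : φ 0 = 0 := by
        apply le_antisymm
        · apply Real.sSup_le _ le_rfl
          rintro y ⟨p, hp, rfl⟩
          have : Astar p = 0 := le_antisymm hp (hAstar_nonneg p)
          exact le_of_eq ((hz p).mpr this)
        · have h0 : Ahat p0 = 0 := (hz p0).mpr ha0
          calc (0 : ℝ) = Ahat p0 := h0.symm
            _ ≤ φ 0 := le_csSup (hbdd_above _) ⟨p0, le_of_eq ha0, rfl⟩
      have hφ_ge : ∀ p : S × A, Ahat p ≤ φ (Astar p) := fun p =>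
        le_csSup (hbdd_above _) ⟨p, le_refl (Astar p), rfl⟩
      -- the class K functions
      refine ⟨fun r => (min r M) / (min r M + 1) * g (min r M) + max (r - M) 0,
        fun r => r + φ r, ⟨?_, ?_⟩, ⟨?_, ?_⟩, ?_⟩
      · -- α 0 = 0
        have h1 : min (0 : ℝ) M = 0 := min_eq_left (le_of_lt hMpos)
        dsimp only
        rw [h1]
        simp
        linarith
      · -- α strictly monotone on Ici 0
        intro a ha b hb hab
        simp only [Set.mem_Ici] at ha hb
        have hxa : (0:ℝ) ≤ min a M := le_min ha (le_of_lt hMpos)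
        have hxab : min a M ≤ min b M := min_le_min (le_of_lt hab) le_rfl
        have hxbM : min b M ≤ M := min_le_right _ _
        have hgm : g (min a M) ≤ g (min b M) := hg_mono _ _ hxab hxbM
        have hd : min a M / (min a M + 1) ≤ min b M / (min b M + 1) :=
          divmono _ _ hxa hxab
        rcases le_or_gt b M with hbM | hbM
        · -- b ≤ M : first term strictly increases
          have hma : min a M = a := min_eq_left (le_trans (le_of_lt hab) hbM)
          have hmb : min b M = b := min_eq_left hbM
          have hgbpos : 0 < g (min b M) := by
            rw [hmb]; exact hg_pos b (lt_of_le_of_lt ha hab) hbM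
          have ht1 : min a M / (min a M + 1) * g (min a M)
              < min b M / (min b M + 1) * g (min b M) := by
            calc min a M / (min a M + 1) * g (min a M)
                ≤ min a M / (min a M + 1) * g (min b M) :=
                  mul_le_mul_of_nonneg_left hgm (div_nonneg hxa (by linarith))
              _ < min b M / (min b M + 1) * g (min b M) := by
                  apply mul_lt_mul_of_pos_right _ hgbpos
                  rw [hma, hmb]; exact divstrict a b ha hab
          have ht2 : max (a - M) 0 ≤ max (b - M) 0 :=
            max_le_max (by linarith) le_rfl
          linarith
        · -- M < b : second term strictly increases
          have ht1 : min a M / (min a M + 1) * g (min a M)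
              ≤ min b M / (min b M + 1) * g (min b M) :=
            mul_le_mul hd hgm (hg_nonneg _) (div_nonneg (le_trans hxa hxab) (by linarith))
          have ht2 : max (a - M) 0 < max (b - M) 0 := by
            have hb' : max (b - M) 0 = b - M := max_eq_left (by linarith)
            rw [hb']
            exact max_lt (by linarith) (by linarith)
          linarith
      · -- β 0 = 0
        simp [hφ0]
      · -- β strictly monotone on Ici 0
        intro a ha b hb hab
        simp only [Set.mem_Ici] at ha hb
        have := hφ_mono a b ha (le_of_lt hab)
        simp only []
        linarith
      · -- the sandwich bounds
        intro p
        have hx : min (Astar p) M = Astar p := min_eq_left (hM_ub p)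
        constructor
        · have h1 : max (Astar p - M) 0 = 0 := max_eq_right (by linarith [hM_ub p])
          dsimp only
          rw [hx, h1]
          have h2 : Astar p / (Astar p + 1) ≤ 1 := by
            rw [div_le_one (by linarith [hAstar_nonneg p])]
            linarith
          calc Astar p / (Astar p + 1) * g (Astar p) + 0
              ≤ 1 * g (Astar p) := by
                have := mul_le_mul_of_nonneg_right h2 (hg_nonneg (Astar p))
                linarith
            _ = g (Astar p) := one_mul _
            _ ≤ Ahat p := hg_le p
        · calc Ahat p ≤ φ (Astar p) := hφ_ge p
            _ ≤ Astar p + φ (Astar p) := by linarith [hAstar_nonneg p]
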